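/- arXiv:0809.0137 — 3 statements merged into one kernel-verified Lean document; each statement's English description precedes it below -/
import Mathlib

section
/- Let μ be a d-regular measure on H and λ > 0. Define c_MT²(x,t,λ) = ∫_{U_λ(B(x,t))} c_MT(X)² dμ^{d+2}(X) where U_λ(B(x,t)) = {X ∈ B(x,t)^{d+2} : min(X) ≥ λ·t}. Then for any ball B ⊆ H, ∫_B ∫_0^{diam(B)} c_MT²(x,t,λ) t^{−(d+1)} dt dμ(x) ≤ (2/λ)^d · (C_μ/d) · ∫_{W_{λ/2}(3B)} c_MT(X)² dμ^{d+2}(X), where W_{λ/2}(3B) = {X ∈ (3B)^{d+2} : min(X) ≥ (λ/2)·diam(X) > 0} and 3B is the ball with the same center and triple radius. -/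
open MeasureTheory Metric Finset

noncomputable section

/-- n! times the n-volume of the simplex on y₀,…,y_n (Gram determinant form). -/
def simplexContent {H : Type*} [NormedAddCommGroup H] [InnerProductSpace ℝ H]
    (n : ℕ) (y : Fin (n + 1) → H) : ℝ :=
  Real.sqrt (Matrix.det (Matrix.of fun i j : Fin n =>
    (inner ℝ (y i.succ - y 0) (y j.succ - y 0) : ℝ)))

/-- The polar sine of X at the vertex X i. -/
def polarSin {H : Type*} [NormedAddCommGroup H] [InnerProductSpace ℝ H]
    {n : ℕ} (X : Fin (n + 2) → H) (i : Fin (n + 2)) : ℝ :=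
  simplexContent (n + 1) X / ∏ j ∈ Finset.univ.erase i, dist (X j) (X i)

/-- The smallest pairwise distance among the coordinates of X. -/
def tmin {H : Type*} [PseudoMetricSpace H] {n : ℕ} (X : Fin n → H) : ℝ :=
  sInf {r | ∃ i j, i ≠ j ∧ r = dist (X i) (X j)}

/-- The largest pairwise distance among the coordinates of X. -/
def tdiam {H : Type*} [PseudoMetricSpace H] {n : ℕ} (X : Fin n → H) : ℝ :=
  Metric.diam (Set.range X)

/-- c_MT(X)² = (1/(d+2))·diam(X)^{−d(d+1)}·Σᵢ p_d sin_{xᵢ}(X)². -/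
def cMTsq {H : Type*} [NormedAddCommGroup H] [InnerProductSpace ℝ H]
    (d : ℕ) (X : Fin (d + 2) → H) : ℝ :=
  (1 / (d + 2)) * (∑ i, polarSin X i ^ 2) / tdiam X ^ (d * (d + 1))

/-- U_λ(B(x,t)): simplices in B(x,t)^{d+2} with min(X) ≥ λ·t. -/
def USet {H : Type*} [PseudoMetricSpace H] (d : ℕ) (lam : ℝ) (x : H) (t : ℝ) :
    Set (Fin (d + 2) → H) :=
  {X | (∀ i, X i ∈ closedBall x t) ∧ lam * t ≤ tmin X}

/-- W_λ(B): simplices in B^{d+2} with min(X) ≥ λ·diam(X) > 0. -/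
def WSet {H : Type*} [PseudoMetricSpace H] (d : ℕ) (lam : ℝ) (B : Set H) :
    Set (Fin (d + 2) → H) :=
  {X | (∀ i, X i ∈ B) ∧ lam * tdiam X ≤ tmin X ∧ 0 < lam * tdiam X}

/-- The (closed) support of a measure. -/
def msupport {H : Type*} [MetricSpace H] [MeasurableSpace H] (μ : Measure H) : Set H :=
  {x | ∀ r : ℝ, 0 < r → 0 < μ (closedBall x r)}

/-- μ is d-regular with regularity constant Cμ. -/
def IsDRegular {H : Type*} [MetricSpace H] [MeasurableSpace H] (d : ℕ) (Cμ : ℝ)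
    (μ : Measure H) : Prop :=
  1 ≤ Cμ ∧ ∀ x ∈ msupport μ, ∀ t : ℝ, 0 < t →
    ENNReal.ofReal t ≤ EMetric.diam (msupport μ) →
      ENNReal.ofReal (Cμ⁻¹ * t ^ d) ≤ μ (closedBall x t) ∧
        μ (closedBall x t) ≤ ENNReal.ofReal (Cμ * t ^ d)

section ContAux
variable {E : Type*} [TopologicalSpace E] {ι : Type*}

theorem continuous_finset_inf'' {f : ι → E → ℝ} (hf : ∀ i, Continuous (f i))
    {s : Finset ι} (hs : s.Nonempty) :
    Continuous fun a => s.inf' hs fun i => f i a := by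
  induction hs using Finset.Nonempty.cons_induction with
  | singleton i => simp only [Finset.inf'_singleton]; exact hf i
  | cons i s hi hs ih =>
    rw [show ((Finset.cons i s hi).inf' (Finset.cons_nonempty hi) fun j => f j ·)
        = fun a => min (f i a) (s.inf' hs fun j => f j a) from
      funext fun a => Finset.inf'_cons hs _]
    exact (hf i).min ih

theorem continuous_finset_sup'' {f : ι → E → ℝ} (hf : ∀ i, Continuous (f i))
    {s : Finset ι} (hs : s.Nonempty) :
    Continuous fun a => s.sup' hs fun i => f i a := by
  induction hs using Finset.Nonempty.cons_induction with
  | singleton i => simp only [Finset.sup'_singleton]; exact hf i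
  | cons i s hi hs ih =>
    rw [show ((Finset.cons i s hi).sup' (Finset.cons_nonempty hi) fun j => f j ·)
        = fun a => max (f i a) (s.sup' hs fun j => f j a) from
      funext fun a => Finset.sup'_cons hs _]
    exact (hf i).max ih

end ContAux

section MinDiam
variable {M : Type*} [PseudoMetricSpace M] {n : ℕ}

theorem offDiag_univ_nonempty :
    (Finset.univ.offDiag : Finset (Fin (n + 2) × Fin (n + 2))).Nonempty := by
  exact ⟨(0, 1), Finset.mem_offDiag.2 ⟨Finset.mem_univ _, Finset.mem_univ _, Fin.zero_ne_one⟩⟩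

theorem tmin_eq_inf' (X : Fin (n + 2) → M) :
    tmin X = (Finset.univ.offDiag).inf' offDiag_univ_nonempty
      (fun p => dist (X p.1) (X p.2)) := by
  rw [Finset.inf'_eq_csInf_image]
  unfold tmin
  congr 1
  ext r
  simp only [Set.mem_setOf_eq, Set.mem_image, Finset.mem_coe, Finset.mem_offDiag,
    Finset.mem_univ, true_and]
  constructor
  · rintro ⟨i, j, hij, rfl⟩; exact ⟨(i, j), hij, rfl⟩
  · rintro ⟨⟨i, j⟩, hij, rfl⟩; exact ⟨i, j, hij, rfl⟩

theorem tmin_le_dist (X : Fin (n + 2) → M) {i j : Fin (n + 2)} (hij : i ≠ j) :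
    tmin X ≤ dist (X i) (X j) := by
  rw [tmin_eq_inf']
  exact Finset.inf'_le (b := (i, j)) (fun p : Fin (n + 2) × Fin (n + 2) => dist (X p.1) (X p.2))
    (Finset.mem_offDiag.2 ⟨Finset.mem_univ _, Finset.mem_univ _, hij⟩)

theorem le_tmin (X : Fin (n + 2) → M) {c : ℝ}
    (h : ∀ i j, i ≠ j → c ≤ dist (X i) (X j)) : c ≤ tmin X := by
  rw [tmin_eq_inf']
  refine Finset.le_inf' _ _ ?_
  rintro ⟨i, j⟩ hij
  simp only [Finset.mem_offDiag, Finset.mem_univ, true_and] at hij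
  exact h i j hij

theorem continuous_tmin : Continuous fun X : Fin (n + 2) → M => tmin X := by
  have : (fun X : Fin (n + 2) → M => tmin X)
      = fun X => (Finset.univ.offDiag).inf' offDiag_univ_nonempty
        (fun p => dist (X p.1) (X p.2)) := funext tmin_eq_inf'
  rw [this]
  exact continuous_finset_inf''
    (fun p => (continuous_apply p.1).dist (continuous_apply p.2)) _

theorem dist_le_tdiam (X : Fin n → M) (i j : Fin n) : dist (X i) (X j) ≤ tdiam X :=
  Metric.dist_le_diam_of_mem (Set.finite_range X).isBounded ⟨i, rfl⟩ ⟨j, rfl⟩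

theorem tdiam_nonneg (X : Fin n → M) : 0 ≤ tdiam X := Metric.diam_nonneg

theorem tdiam_le (X : Fin n → M) {c : ℝ} (hc : 0 ≤ c)
    (h : ∀ i j, dist (X i) (X j) ≤ c) : tdiam X ≤ c := by
  refine Metric.diam_le_of_forall_dist_le hc ?_
  rintro x ⟨i, rfl⟩ y ⟨j, rfl⟩
  exact h i j

theorem tmin_le_tdiam (X : Fin (n + 2) → M) : tmin X ≤ tdiam X :=
  (tmin_le_dist X (Fin.zero_ne_one)).trans (dist_le_tdiam X 0 1)

theorem univ_pair_nonempty : (Finset.univ : Finset (Fin (n + 2) × Fin (n + 2))).Nonempty :=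
  ⟨(0, 0), Finset.mem_univ _⟩

theorem tdiam_eq_sup' (X : Fin (n + 2) → M) :
    tdiam X = Finset.univ.sup' univ_pair_nonempty
      (fun p : Fin (n + 2) × Fin (n + 2) => dist (X p.1) (X p.2)) := by
  refine le_antisymm ?_ ?_
  · refine tdiam_le X ?_ ?_
    · exact le_trans dist_nonneg (Finset.le_sup'
        (fun p : Fin (n + 2) × Fin (n + 2) => dist (X p.1) (X p.2)) (Finset.mem_univ (0, 0)))
    · intro i j
      exact Finset.le_sup'
        (fun p : Fin (n + 2) × Fin (n + 2) => dist (X p.1) (X p.2)) (Finset.mem_univ (i, j))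
  · exact Finset.sup'_le _ _ fun p _ => dist_le_tdiam X p.1 p.2

theorem continuous_tdiam : Continuous fun X : Fin (n + 2) → M => tdiam X := by
  have : (fun X : Fin (n + 2) → M => tdiam X)
      = fun X => Finset.univ.sup' univ_pair_nonempty
        (fun p : Fin (n + 2) × Fin (n + 2) => dist (X p.1) (X p.2)) := funext tdiam_eq_sup'
  rw [this]
  exact continuous_finset_sup''
    (fun p => (continuous_apply p.1).dist (continuous_apply p.2)) _

end MinDiam

section Meas

variable {H : Type*} [NormedAddCommGroup H] [InnerProductSpace ℝ H]

theorem continuous_simplexContent (n : ℕ) :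
    Continuous fun y : Fin (n + 1) → H => simplexContent n y := by
  unfold simplexContent
  refine Real.continuous_sqrt.comp ?_
  refine Continuous.matrix_det ?_
  refine continuous_matrix fun i j => ?_
  exact Continuous.inner ((continuous_apply _).sub (continuous_apply 0))
    ((continuous_apply _).sub (continuous_apply 0))

variable [SecondCountableTopology H] [MeasurableSpace H] [BorelSpace H]

theorem measurable_polarSin {n : ℕ} (i : Fin (n + 2)) :
    Measurable fun X : Fin (n + 2) → H => polarSin X i := by
  unfold polarSin
  refine Measurable.div ((continuous_simplexContent (n + 1)).measurable) ?_
  refine Finset.measurable_prod _ fun j _ => ?_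
  exact ((continuous_apply j).dist (continuous_apply i)).measurable

theorem measurable_cMTsq (d : ℕ) : Measurable fun X : Fin (d + 2) → H => cMTsq d X := by
  unfold cMTsq
  refine Measurable.div ?_ ?_
  · exact (measurable_const.mul (Finset.measurable_sum _ fun i _ =>
      (measurable_polarSin i).pow_const 2))
  · exact (continuous_tdiam.measurable).pow_const _

end Meas

section Supp

variable {M : Type*} [MetricSpace M] [MeasurableSpace M]

theorem msupport_compl_null [SecondCountableTopology M] [OpensMeasurableSpace M]
    (μ : Measure M) : μ (msupport μ)ᶜ = 0 := by
  obtain ⟨T, hTc, hTS, hTU⟩ := TopologicalSpace.isOpen_sUnion_countable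
    {s : Set M | IsOpen s ∧ μ s = 0} (fun s hs => hs.1)
  have hT0 : μ (⋃₀ T) = 0 := (measure_sUnion_null_iff hTc).2 fun s hs => (hTS hs).2
  refine measure_mono_null ?_ (hTU ▸ hT0)
  intro x hx
  simp only [msupport, Set.mem_compl_iff, Set.mem_setOf_eq, not_forall] at hx
  obtain ⟨r, hr, hμr⟩ := hx
  have h0 : μ (ball x r) = 0 := by
    have := measure_mono (μ := μ) (ball_subset_closedBall (x := x) (ε := r))
    have h2 : μ (closedBall x r) = 0 := by
      by_contra h
      exact hμr (pos_iff_ne_zero.2 h)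
    exact le_antisymm (h2 ▸ this) (zero_le)
  exact Set.mem_sUnion.2 ⟨ball x r, ⟨isOpen_ball, h0⟩, mem_ball_self hr⟩

theorem mu_closedBall_le {d : ℕ} {Cμ : ℝ} {μ : Measure M} (hreg : IsDRegular d Cμ μ)
    (hnull : μ (msupport μ)ᶜ = 0) {y : M} (hy : y ∈ msupport μ) {T : ℝ} (hT : 0 < T)
    (hdiam : 0 < EMetric.diam (msupport μ)) :
    μ (closedBall y T) ≤ ENNReal.ofReal (Cμ * T ^ d) := by
  rcases le_or_gt (ENNReal.ofReal T) (EMetric.diam (msupport μ)) with h | h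
  · exact (hreg.2 y hy T hT h).2
  · have hfin : EMetric.diam (msupport μ) ≠ ⊤ := (h.trans_le le_top).ne
    set D := (EMetric.diam (msupport μ)).toReal with hD
    have hD0 : 0 < D := ENNReal.toReal_pos hdiam.ne' hfin
    have hDT : D ≤ T := by
      have := ENNReal.toReal_mono ENNReal.ofReal_ne_top h.le
      rwa [ENNReal.toReal_ofReal hT.le] at this
    have hsub : msupport μ ⊆ closedBall y D := by
      intro w hw
      have hle := EMetric.edist_le_diam_of_mem hw hy
      rw [mem_closedBall, dist_edist]
      exact ENNReal.toReal_mono hfin hle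
    have hb : μ (closedBall y D) ≤ ENNReal.ofReal (Cμ * D ^ d) :=
      (hreg.2 y hy D hD0 (by rw [ENNReal.ofReal_toReal hfin])).2
    have hCμ : (0:ℝ) ≤ Cμ := le_trans zero_le_one hreg.1
    calc μ (closedBall y T) ≤ μ (closedBall y D ∪ (msupport μ)ᶜ) := by
          refine measure_mono fun w _ => ?_
          by_cases hws : w ∈ msupport μ
          · exact Or.inl (hsub hws)
          · exact Or.inr hws
      _ ≤ μ (closedBall y D) + μ (msupport μ)ᶜ := measure_union_le _ _
      _ = μ (closedBall y D) := by rw [hnull, add_zero]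
      _ ≤ ENNReal.ofReal (Cμ * D ^ d) := hb
      _ ≤ ENNReal.ofReal (Cμ * T ^ d) := by
          refine ENNReal.ofReal_le_ofReal ?_
          exact mul_le_mul_of_nonneg_left (pow_le_pow_left₀ hD0.le hDT d) hCμ

end Supp

theorem lintegral_Ici_inv_pow {d : ℕ} (hd : 1 ≤ d) {a : ℝ} (ha : 0 < a) :
    (∫⁻ t in Set.Ici a, (ENNReal.ofReal (t ^ (d + 1)))⁻¹ ∂(volume : Measure ℝ))
      = ENNReal.ofReal ((a ^ d)⁻¹ / d) := by
  rw [← setLIntegral_congr Ioi_ae_eq_Ici]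
  have hlt : (-(d + 1) : ℝ) < -1 := by
    have : (1:ℝ) ≤ (d:ℝ) := by exact_mod_cast hd
    linarith
  have h1 : ∀ t ∈ Set.Ioi a, (ENNReal.ofReal (t ^ (d + 1)))⁻¹
      = ENNReal.ofReal (t ^ (-((d:ℝ) + 1))) := by
    intro t ht
    have htpos : 0 < t := ha.trans ht
    rw [← ENNReal.ofReal_inv_of_pos (pow_pos htpos _)]
    congr 1
    rw [Real.rpow_neg htpos.le, ← Real.rpow_natCast t (d + 1)]
    push_cast
    ring_nf
  rw [setLIntegral_congr_fun measurableSet_Ioi h1]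
  rw [← ofReal_integral_eq_lintegral_ofReal (integrableOn_Ioi_rpow_of_lt hlt ha)
    ((ae_restrict_iff' measurableSet_Ioi).2 (Filter.Eventually.of_forall fun t ht =>
      Real.rpow_nonneg (ha.trans ht).le _))]
  rw [integral_Ioi_rpow_of_lt hlt ha]
  congr 1
  have : (-((d:ℝ) + 1) + 1) = -(d:ℝ) := by ring
  rw [this, Real.rpow_neg ha.le, Real.rpow_natCast]
  have hd0 : (0:ℝ) < (d:ℝ) := by exact_mod_cast hd
  field_simp

/-- Multiscale Fubini bound:
∫_B ∫₀^{diam B} c_MT²(x,t,λ) t^{−(d+1)} dt dμ(x)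
  ≤ (2/λ)^d (Cμ/d) ∫_{W_{λ/2}(3B)} c_MT(X)² dμ^{d+2}(X). -/
theorem multiscale_curvature_fubini_bound {H : Type*} [NormedAddCommGroup H]
    [InnerProductSpace ℝ H] [CompleteSpace H] [SecondCountableTopology H]
    [MeasurableSpace H] [BorelSpace H]
    (d : ℕ) (hd : 1 ≤ d) (hdim : (d : Cardinal) < Module.rank ℝ H)
    (Cμ : ℝ) (μ : Measure H) [SigmaFinite μ] (hreg : IsDRegular d Cμ μ)
    (lam : ℝ) (hlam : 0 < lam) (z : H) (r : ℝ) (hr : 0 < r) :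
    (∫⁻ x in closedBall z r,
        (∫⁻ t in Set.Ioc (0 : ℝ) (Metric.diam (closedBall z r)),
          (∫⁻ X in USet d lam x t, ENNReal.ofReal (cMTsq d X)
              ∂(Measure.pi fun _ : Fin (d + 2) => μ)) /
            ENNReal.ofReal (t ^ (d + 1)) ∂(volume : Measure ℝ)) ∂μ) ≤
      ENNReal.ofReal ((2 / lam) ^ d * (Cμ / d)) *
        ∫⁻ X in WSet d (lam / 2) (closedBall z (3 * r)), ENNReal.ofReal (cMTsq d X)
          ∂(Measure.pi fun _ : Fin (d + 2) => μ) := by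
  set ν : Measure (Fin (d + 2) → H) := Measure.pi fun _ : Fin (d + 2) => μ with hνdef
  set f : (Fin (d + 2) → H) → ENNReal := fun X => ENNReal.ofReal (cMTsq d X) with hfdef
  set B : Set H := closedBall z r with hBdef
  set Dm : ℝ := Metric.diam (closedBall z r) with hDdef
  set W : Set (Fin (d + 2) → H) := WSet d (lam / 2) (closedBall z (3 * r)) with hWdef
  set C : ENNReal := ENNReal.ofReal ((2 / lam) ^ d * (Cμ / d)) with hCdef
  have hfm : Measurable f := (measurable_cMTsq d).ennreal_ofReal
  have hnull : μ (msupport μ)ᶜ = 0 := msupport_compl_null μ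
  -- the joint constraint set
  set S : Set (H × ℝ × (Fin (d + 2) → H)) := {p | p.2.2 ∈ USet d lam p.1 p.2.1} with hSdef
  have hSclosed : IsClosed S := by
    have hSeq : S = (⋂ i, {p : H × ℝ × (Fin (d + 2) → H) | dist (p.2.2 i) p.1 ≤ p.2.1}) ∩
        {p | lam * p.2.1 ≤ tmin p.2.2} := by
      ext p
      simp only [hSdef, USet, Set.mem_setOf_eq, Set.mem_inter_iff, Set.mem_iInter,
        mem_closedBall]
    rw [hSeq]
    refine IsClosed.inter (isClosed_iInter fun i => ?_) ?_
    · exact isClosed_le (((continuous_apply i).comp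
        (continuous_snd.comp continuous_snd)).dist continuous_fst)
        (continuous_fst.comp continuous_snd)
    · exact isClosed_le (continuous_const.mul (continuous_fst.comp continuous_snd))
        (continuous_tmin.comp (continuous_snd.comp continuous_snd))
  set j : H × ℝ × (Fin (d + 2) → H) → ENNReal :=
    S.indicator (fun p => (ENNReal.ofReal (p.2.1 ^ (d + 1)))⁻¹) with hjdef
  have hjm : Measurable j := by
    refine Measurable.indicator ?_ hSclosed.measurableSet
    exact (ENNReal.measurable_ofReal.comp
      ((measurable_fst.comp measurable_snd).pow_const _)).inv
  have hUmeas : ∀ (x : H) (t : ℝ), MeasurableSet (USet d lam x t) := by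
    intro x t
    have : USet d lam x t = (fun X : Fin (d + 2) → H => (x, t, X)) ⁻¹' S := rfl
    rw [this]
    exact hSclosed.measurableSet.preimage
      (measurable_const.prodMk (measurable_const.prodMk measurable_id))
  have hWmeas : MeasurableSet W := by
    have hWeq : W = (⋂ i, {X : Fin (d + 2) → H | X i ∈ closedBall z (3 * r)}) ∩
        ({X | lam / 2 * tdiam X ≤ tmin X} ∩ {X | 0 < lam / 2 * tdiam X}) := by
      ext X
      simp only [hWdef, WSet, Set.mem_setOf_eq, Set.mem_inter_iff, Set.mem_iInter]
    rw [hWeq]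
    refine MeasurableSet.inter (MeasurableSet.iInter fun i => ?_)
      (MeasurableSet.inter ?_ ?_)
    · exact (Metric.isClosed_closedBall.preimage (continuous_apply i)).measurableSet
    · exact (isClosed_le (continuous_const.mul continuous_tdiam) continuous_tmin).measurableSet
    · exact (isOpen_lt continuous_const (continuous_const.mul continuous_tdiam)).measurableSet
  -- geometry : U ⊆ W
  have hUW : ∀ x ∈ B, ∀ t ∈ Set.Ioc (0 : ℝ) Dm, ∀ X ∈ USet d lam x t, X ∈ W := by
    intro x hx t ht X hX
    obtain ⟨hXball, hXmin⟩ := hX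
    have ht0 : 0 < t := ht.1
    have hrD : Dm ≤ 2 * r := diam_closedBall hr.le
    have htD : t ≤ 2 * r := le_trans ht.2 hrD
    have hxz : dist x z ≤ r := hx
    have htd2 : tdiam X ≤ 2 * t := by
      refine tdiam_le X (by linarith) fun i j => ?_
      calc dist (X i) (X j) ≤ dist (X i) x + dist x (X j) := dist_triangle _ _ _
        _ ≤ t + t := add_le_add (hXball i) (by rw [dist_comm]; exact hXball j)
        _ = 2 * t := by ring
    have hminpos : 0 < tmin X := lt_of_lt_of_le (mul_pos hlam ht0) hXmin
    have htdpos : 0 < tdiam X := lt_of_lt_of_le hminpos (tmin_le_tdiam X)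
    refine ⟨fun i => ?_, ?_, ?_⟩
    · rw [mem_closedBall]
      calc dist (X i) z ≤ dist (X i) x + dist x z := dist_triangle _ _ _
        _ ≤ t + r := add_le_add (hXball i) hxz
        _ ≤ 3 * r := by linarith
    · calc lam / 2 * tdiam X ≤ lam / 2 * (2 * t) :=
            mul_le_mul_of_nonneg_left htd2 (by linarith)
        _ = lam * t := by ring
        _ ≤ tmin X := hXmin
    · exact mul_pos (by linarith) htdpos
  -- step A
  have stepA : ∀ x : H,
      (∫⁻ t in Set.Ioc (0 : ℝ) Dm,
        (∫⁻ X in USet d lam x t, f X ∂ν) / ENNReal.ofReal (t ^ (d + 1)) ∂volume)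
        = ∫⁻ t in Set.Ioc (0 : ℝ) Dm, ∫⁻ X, f X * j (x, t, X) ∂ν ∂volume := by
    intro x
    refine setLIntegral_congr_fun measurableSet_Ioc (
      fun t ht => ?_)
    have ht0 : 0 < t := ht.1
    have hc0 : ENNReal.ofReal (t ^ (d + 1)) ≠ 0 := by
      simp only [ne_eq, ENNReal.ofReal_eq_zero, not_le]
      positivity
    have hcinv : (ENNReal.ofReal (t ^ (d + 1)))⁻¹ ≠ ⊤ := ENNReal.inv_ne_top.2 hc0
    have h1 : ∀ X, f X * j (x, t, X)
        = (USet d lam x t).indicator (fun X => f X * (ENNReal.ofReal (t ^ (d + 1)))⁻¹) X := by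
      intro X
      by_cases hX : X ∈ USet d lam x t
      · rw [Set.indicator_of_mem hX]
        have hmem : (x, t, X) ∈ S := hX
        have : j (x, t, X) = (ENNReal.ofReal (t ^ (d + 1)))⁻¹ := Set.indicator_of_mem hmem _
        rw [this]
      · rw [Set.indicator_of_notMem hX]
        have hmem : (x, t, X) ∉ S := hX
        have : j (x, t, X) = 0 := Set.indicator_of_notMem hmem _
        rw [this, mul_zero]
    calc (∫⁻ X in USet d lam x t, f X ∂ν) / ENNReal.ofReal (t ^ (d + 1))
        = (∫⁻ X in USet d lam x t, f X ∂ν) * (ENNReal.ofReal (t ^ (d + 1)))⁻¹ := by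
          rw [div_eq_mul_inv]
      _ = ∫⁻ X in USet d lam x t, f X * (ENNReal.ofReal (t ^ (d + 1)))⁻¹ ∂ν :=
          (lintegral_mul_const' _ _ hcinv).symm
      _ = ∫⁻ X, (USet d lam x t).indicator
            (fun X => f X * (ENNReal.ofReal (t ^ (d + 1)))⁻¹) X ∂ν :=
          (lintegral_indicator (hUmeas x t) _).symm
      _ = ∫⁻ X, f X * j (x, t, X) ∂ν := lintegral_congr fun X => (h1 X).symm
  -- step B : swap t and X
  have stepB : ∀ x : H,
      (∫⁻ t in Set.Ioc (0 : ℝ) Dm, ∫⁻ X, f X * j (x, t, X) ∂ν ∂volume)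
        = ∫⁻ X, ∫⁻ t in Set.Ioc (0 : ℝ) Dm, f X * j (x, t, X) ∂volume ∂ν := by
    intro x
    refine lintegral_lintegral_swap ?_
    refine Measurable.aemeasurable ?_
    have : Measurable fun q : ℝ × (Fin (d + 2) → H) => f q.2 * j (x, q.1, q.2) :=
      (hfm.comp measurable_snd).mul (hjm.comp (measurable_const.prodMk
        (measurable_fst.prodMk measurable_snd)))
    exact this
  -- step C : swap x and X
  have stepC : (∫⁻ x in B, ∫⁻ X, (∫⁻ t in Set.Ioc (0 : ℝ) Dm,
        f X * j (x, t, X) ∂volume) ∂ν ∂μ)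
      = ∫⁻ X, ∫⁻ x in B, (∫⁻ t in Set.Ioc (0 : ℝ) Dm,
        f X * j (x, t, X) ∂volume) ∂μ ∂ν := by
    refine lintegral_lintegral_swap ?_
    refine Measurable.aemeasurable ?_
    have h : Measurable fun q : (H × (Fin (d + 2) → H)) × ℝ =>
        f q.1.2 * j (q.1.1, q.2, q.1.2) :=
      (hfm.comp (measurable_snd.comp measurable_fst)).mul (hjm.comp
        ((measurable_fst.comp measurable_fst).prodMk
          (measurable_snd.prodMk (measurable_snd.comp measurable_fst))))
    exact h.lintegral_prod_right'
  -- weight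
  set wt : (Fin (d + 2) → H) → ENNReal :=
    fun X => ∫⁻ t in Set.Ioc (0 : ℝ) Dm, ∫⁻ x in B, j (x, t, X) ∂μ ∂volume with hwtdef
  have stepD : ∀ X : Fin (d + 2) → H,
      (∫⁻ x in B, (∫⁻ t in Set.Ioc (0 : ℝ) Dm, f X * j (x, t, X) ∂volume) ∂μ)
        = f X * wt X := by
    intro X
    have hfX : f X ≠ ⊤ := ENNReal.ofReal_ne_top
    calc (∫⁻ x in B, (∫⁻ t in Set.Ioc (0 : ℝ) Dm, f X * j (x, t, X) ∂volume) ∂μ)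
        = ∫⁻ x in B, f X * (∫⁻ t in Set.Ioc (0 : ℝ) Dm, j (x, t, X) ∂volume) ∂μ :=
          lintegral_congr fun x => lintegral_const_mul' _ _ hfX
      _ = f X * ∫⁻ x in B, (∫⁻ t in Set.Ioc (0 : ℝ) Dm, j (x, t, X) ∂volume) ∂μ :=
          lintegral_const_mul' _ _ hfX
      _ = f X * wt X := by
          congr 1
          refine lintegral_lintegral_swap (Measurable.aemeasurable ?_)
          exact hjm.comp (measurable_fst.prodMk (measurable_snd.prodMk measurable_const))
  -- key estimate
  have key : ∀ X : Fin (d + 2) → H, (∀ i, X i ∈ msupport μ) →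
      f X * wt X ≤ C * W.indicator f X := by
    intro X hsupp
    by_cases hXW : X ∈ W
    · -- main case
      obtain ⟨hW1, hW2, hW3⟩ := id hXW
      have htd : 0 < tdiam X := by nlinarith
      have htm : 0 < tmin X := lt_of_lt_of_le hW3 hW2
      set a : ℝ := tdiam X / 2 with hadef
      set T : ℝ := tmin X / lam with hTdef
      have ha : 0 < a := by positivity
      have hT : 0 < T := by positivity
      have hCμ1 : (1 : ℝ) ≤ Cμ := hreg.1
      have hCμ0 : (0 : ℝ) ≤ Cμ := le_trans zero_le_one hCμ1
      have hdiampos : 0 < EMetric.diam (msupport μ) := by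
        have hne : X 0 ≠ X 1 := by
          intro h
          have := tmin_le_dist X (Fin.zero_ne_one (n := d))
          rw [h, dist_self] at this
          linarith
        exact lt_of_lt_of_le (edist_pos.2 hne)
          (EMetric.edist_le_diam_of_mem (hsupp 0) (hsupp 1))
      have hM : μ (closedBall (X 0) T) ≤ ENNReal.ofReal (Cμ * T ^ d) :=
        mu_closedBall_le hreg hnull (hsupp 0) hT hdiampos
      set M : ENNReal := ENNReal.ofReal (Cμ * T ^ d) with hMdef
      have claim1 : ∀ t ∈ Set.Ioc (0 : ℝ) Dm, (∫⁻ x in B, j (x, t, X) ∂μ)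
          ≤ (Set.Ici a).indicator (fun t => (ENNReal.ofReal (t ^ (d + 1)))⁻¹ * M) t := by
        intro t ht
        by_cases hta : t ∈ Set.Ici a
        · rw [Set.indicator_of_mem hta]
          have hj : ∀ x : H, j (x, t, X)
              ≤ (closedBall (X 0) T).indicator
                  (fun _ => (ENNReal.ofReal (t ^ (d + 1)))⁻¹) x := by
            intro x
            by_cases hm : (x, t, X) ∈ S
            · have hU : X ∈ USet d lam x t := hm
              have hx0 : x ∈ closedBall (X 0) T := by
                rw [mem_closedBall, dist_comm]
                have h1 : dist (X 0) x ≤ t := hU.1 0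
                have h2 : t ≤ T := by
                  rw [hTdef, le_div_iff₀ hlam]
                  have := hU.2
                  linarith
                linarith
              rw [Set.indicator_of_mem hx0]
              exact le_of_eq (Set.indicator_of_mem hm _)
            · have : j (x, t, X) = 0 := Set.indicator_of_notMem hm _
              rw [this]
              exact zero_le
          calc (∫⁻ x in B, j (x, t, X) ∂μ)
              ≤ ∫⁻ x, (closedBall (X 0) T).indicator
                  (fun _ => (ENNReal.ofReal (t ^ (d + 1)))⁻¹) x ∂μ :=
                le_trans (lintegral_mono hj) (lintegral_mono' Measure.restrict_le_self le_rfl)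
            _ = (ENNReal.ofReal (t ^ (d + 1)))⁻¹ * μ (closedBall (X 0) T) :=
                lintegral_indicator_const measurableSet_closedBall _
            _ ≤ (ENNReal.ofReal (t ^ (d + 1)))⁻¹ * M := mul_le_mul_right hM _
        · rw [Set.indicator_of_notMem hta]
          have hz : ∀ x : H, j (x, t, X) = 0 := by
            intro x
            refine Set.indicator_of_notMem ?_ _
            intro hm
            have hU : X ∈ USet d lam x t := hm
            have htd2 : tdiam X ≤ 2 * t := by
              refine tdiam_le X (by linarith [ht.1]) fun i j' => ?_
              calc dist (X i) (X j') ≤ dist (X i) x + dist x (X j') := dist_triangle _ _ _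
                _ ≤ t + t := add_le_add (hU.1 i) (by rw [dist_comm]; exact hU.1 j')
                _ = 2 * t := by ring
            refine hta ?_
            rw [Set.mem_Ici, hadef]
            linarith
          have : (∫⁻ x in B, j (x, t, X) ∂μ) = ∫⁻ x in B, 0 ∂μ :=
            lintegral_congr fun x => hz x
          rw [this, lintegral_zero]
      have hgm : Measurable ((Set.Ici a).indicator
          (fun t : ℝ => (ENNReal.ofReal (t ^ (d + 1)))⁻¹ * M)) := by
        refine Measurable.indicator ?_ measurableSet_Ici
        exact ((ENNReal.measurable_ofReal.comp (measurable_id.pow_const _)).inv).mul_const M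
      have hwt : wt X ≤ C := by
        calc wt X ≤ ∫⁻ t in Set.Ioc (0 : ℝ) Dm, (Set.Ici a).indicator
              (fun t => (ENNReal.ofReal (t ^ (d + 1)))⁻¹ * M) t ∂volume :=
            setLIntegral_mono hgm claim1
          _ = ∫⁻ t in Set.Ici a ∩ Set.Ioc (0 : ℝ) Dm,
              (ENNReal.ofReal (t ^ (d + 1)))⁻¹ * M ∂volume := by
            rw [lintegral_indicator measurableSet_Ici, Measure.restrict_restrict
              measurableSet_Ici]
          _ ≤ ∫⁻ t in Set.Ici a, (ENNReal.ofReal (t ^ (d + 1)))⁻¹ * M ∂volume :=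
            lintegral_mono_set Set.inter_subset_left
          _ = (∫⁻ t in Set.Ici a, (ENNReal.ofReal (t ^ (d + 1)))⁻¹ ∂volume) * M :=
            lintegral_mul_const' _ _ ENNReal.ofReal_ne_top
          _ = ENNReal.ofReal ((a ^ d)⁻¹ / d) * M := by rw [lintegral_Ici_inv_pow hd ha]
          _ = ENNReal.ofReal ((a ^ d)⁻¹ / d * (Cμ * T ^ d)) := by
            rw [hMdef, ← ENNReal.ofReal_mul (by positivity)]
          _ ≤ C := by
            rw [hCdef]
            refine ENNReal.ofReal_le_ofReal ?_
            have hTa : T ≤ 2 / lam * a := by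
              rw [hTdef, hadef, show 2 / lam * (tdiam X / 2) = tdiam X / lam by ring]
              gcongr
              exact tmin_le_tdiam X
            have hXX : T ^ d * (a ^ d)⁻¹ ≤ (2 / lam) ^ d := by
              rw [← div_eq_mul_inv, div_le_iff₀ (pow_pos ha d)]
              calc T ^ d ≤ (2 / lam * a) ^ d := pow_le_pow_left₀ hT.le hTa d
                _ = (2 / lam) ^ d * a ^ d := mul_pow _ _ _
            have hd0 : (0 : ℝ) < d := by exact_mod_cast hd
            calc (a ^ d)⁻¹ / d * (Cμ * T ^ d) = Cμ / d * (T ^ d * (a ^ d)⁻¹) := by ring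
              _ ≤ Cμ / d * ((2 / lam) ^ d) := by
                refine mul_le_mul_of_nonneg_left hXX (by positivity)
              _ = (2 / lam) ^ d * (Cμ / d) := by ring
      calc f X * wt X ≤ f X * C := mul_le_mul_right hwt _
        _ = C * f X := mul_comm _ _
        _ = C * W.indicator f X := by rw [Set.indicator_of_mem hXW]
    · -- X not in W : weight vanishes
      have hwt0 : wt X = 0 := by
        have hinner : ∀ t ∈ Set.Ioc (0 : ℝ) Dm, (∫⁻ x in B, j (x, t, X) ∂μ) = 0 := by
          intro t ht
          have hz : ∀ x ∈ B, j (x, t, X) = 0 := by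
            intro x hx
            refine Set.indicator_of_notMem ?_ _
            intro hm
            exact hXW (hUW x hx t ht X hm)
          calc (∫⁻ x in B, j (x, t, X) ∂μ) = ∫⁻ x in B, 0 ∂μ :=
              setLIntegral_congr_fun measurableSet_closedBall
                hz
            _ = 0 := lintegral_zero
        calc wt X = ∫⁻ t in Set.Ioc (0 : ℝ) Dm, 0 ∂volume :=
            setLIntegral_congr_fun measurableSet_Ioc hinner
          _ = 0 := lintegral_zero
      rw [hwt0, mul_zero]
      exact zero_le
  -- a.e. support membership
  have hae : ∀ᵐ X ∂ν, ∀ i, X i ∈ msupport μ := by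
    rw [ae_all_iff]
    intro i
    rw [ae_iff]
    exact Measure.pi_eval_preimage_null (μ := fun _ : Fin (d + 2) => μ) (i := i) hnull
  -- assemble
  calc (∫⁻ x in B, (∫⁻ t in Set.Ioc (0 : ℝ) Dm,
        (∫⁻ X in USet d lam x t, f X ∂ν) / ENNReal.ofReal (t ^ (d + 1)) ∂volume) ∂μ)
      = ∫⁻ x in B, (∫⁻ t in Set.Ioc (0 : ℝ) Dm, ∫⁻ X, f X * j (x, t, X) ∂ν ∂volume) ∂μ :=
        lintegral_congr fun x => stepA x
    _ = ∫⁻ x in B, ∫⁻ X, (∫⁻ t in Set.Ioc (0 : ℝ) Dm, f X * j (x, t, X) ∂volume) ∂ν ∂μ :=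
        lintegral_congr fun x => stepB x
    _ = ∫⁻ X, ∫⁻ x in B, (∫⁻ t in Set.Ioc (0 : ℝ) Dm, f X * j (x, t, X) ∂volume) ∂μ ∂ν :=
        stepC
    _ = ∫⁻ X, f X * wt X ∂ν := lintegral_congr fun X => stepD X
    _ ≤ ∫⁻ X, C * W.indicator f X ∂ν := lintegral_mono_ae (hae.mono fun X hX => key X hX)
    _ = C * ∫⁻ X, W.indicator f X ∂ν := lintegral_const_mul' _ _ ENNReal.ofReal_ne_top
    _ = C * ∫⁻ X in W, f X ∂ν := by rw [lintegral_indicator hWmeas]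
end
end

section
/- Let x₀,…,x_n ∈ H span a non-degenerate n-simplex with M_n(x₀,…,x_n) ≥ ω·tⁿ, diam{x₀,…,x_n} ≤ 3t, and suppose a point w = x₀ + Σ_{i=1}^n s_i·(x_i − x₀) lies in the affine span L of x₀,…,x_n with ‖w − x₀‖ ≤ 2t. Then max_{1≤i≤n} |s_i| ≤ 2·3^{n−1}/ω. -/
open Metric Finset

noncomputable section

open scoped Matrix

lemma amgm_aux (m : ℕ) (hm : 0 < m) (μ : Fin m → ℝ) (h : ∀ i, 0 ≤ μ i) :
    ∏ i, μ i ≤ ((∑ i, μ i) / m) ^ m := by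
  have hm' : (m : ℝ) ≠ 0 := Nat.cast_ne_zero.mpr hm.ne'
  have key := Real.geom_mean_le_arith_mean_weighted Finset.univ
    (fun _ => (m : ℝ)⁻¹) μ (fun i _ => by positivity)
    (by simp [Finset.sum_const, mul_comm, hm']) (fun i _ => h i)
  have h1 : ∏ i, μ i = (∏ i, μ i ^ ((m : ℝ)⁻¹)) ^ m := by
    rw [← Finset.prod_pow]
    refine Finset.prod_congr rfl fun i _ => ?_
    rw [← Real.rpow_natCast (μ i ^ ((m:ℝ)⁻¹)) m, ← Real.rpow_mul (h i),
      inv_mul_cancel₀ hm', Real.rpow_one]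
  rw [h1]
  have h2 : (0:ℝ) ≤ ∏ i, μ i ^ ((m : ℝ)⁻¹) :=
    Finset.prod_nonneg fun i _ => Real.rpow_nonneg (h i) _
  calc (∏ i, μ i ^ ((m : ℝ)⁻¹)) ^ m ≤ (∑ i, (m:ℝ)⁻¹ * μ i) ^ m :=
        pow_le_pow_left₀ h2 key m
    _ = ((∑ i, μ i) / m) ^ m := by rw [← Finset.mul_sum, div_eq_inv_mul]

lemma hadamard_psd (m : ℕ) (M : Matrix (Fin m) (Fin m) ℝ) (hM : M.PosSemidef) :
    M.det ≤ ∏ i, M i i := by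
  rcases Nat.eq_zero_or_pos m with rfl | hm
  · simp [Matrix.det_fin_zero]
  obtain ⟨Bm, hB⟩ : ∃ Bm : Matrix (Fin m) (Fin m) ℝ, M = Bmᴴ * Bm := by
    open MatrixOrder in
    exact ⟨CFC.sqrt M, by rw [(Matrix.nonneg_iff_posSemidef.mp (CFC.sqrt_nonneg M)).1.eq, CFC.sqrt_mul_sqrt_self M hM.nonneg]⟩
  have hMij : ∀ i j, M i j = ∑ k, Bm k i * Bm k j := by
    intro i j
    rw [hB]
    simp [Matrix.mul_apply, Matrix.conjTranspose_apply]
  have hdiag : ∀ i, 0 ≤ M i i := by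
    intro i; rw [hMij]
    exact Finset.sum_nonneg fun k _ => mul_self_nonneg _
  by_cases hzero : ∃ i, M i i = 0
  · obtain ⟨i, hi⟩ := hzero
    have hcol : ∀ k, Bm k i = 0 := by
      intro k
      have h0 : ∑ k, Bm k i * Bm k i = 0 := by rw [← hMij i i]; exact hi
      have := (Finset.sum_eq_zero_iff_of_nonneg
        (fun k _ => mul_self_nonneg (Bm k i))).mp h0 k (Finset.mem_univ k)
      exact mul_self_eq_zero.mp this
    have hd0 : M.det = 0 := by
      apply Matrix.det_eq_zero_of_column_eq_zero i
      intro j; rw [hMij]; simp [hcol]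
    rw [hd0]
    exact Finset.prod_nonneg fun j _ => hdiag j
  push_neg at hzero
  have hpos : ∀ i, 0 < M i i := fun i => (hdiag i).lt_of_ne (Ne.symm (hzero i))
  set d : Fin m → ℝ := fun i => (Real.sqrt (M i i))⁻¹ with hd
  have hdpos : ∀ i, 0 < d i := fun i => inv_pos.mpr (Real.sqrt_pos.mpr (hpos i))
  set D := Matrix.diagonal d with hDdef
  have hDH : Dᴴ = D := by
    simp [hDdef, Matrix.diagonal_conjTranspose]
  have hN : (D * M * D).PosSemidef := by
    have := hM.mul_mul_conjTranspose_same D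
    rwa [hDH] at this
  set N := D * M * D with hNdef
  have hNe : ∀ i j, N i j = d i * M i j * d j := by
    intro i j
    simp [hNdef, hDdef, Matrix.diagonal_mul, Matrix.mul_diagonal]
  have hNdiag : ∀ i, N i i = 1 := by
    intro i
    rw [hNe]
    rw [hd]
    have h1 : Real.sqrt (M i i) ≠ 0 := (Real.sqrt_pos.mpr (hpos i)).ne'
    have h2 : Real.sqrt (M i i) * Real.sqrt (M i i) = M i i :=
      Real.mul_self_sqrt (hdiag i)
    field_simp
    rw [Real.sq_sqrt (hdiag i)]
  -- trace of N
  have htr : N.trace = (m : ℝ) := by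
    unfold Matrix.trace
    simp [Matrix.diag, hNdiag]
  -- eigenvalues
  have hH := hN.1
  have hdet : N.det = ∏ i, hH.eigenvalues i := by
    simpa using hH.det_eq_prod_eigenvalues
  have htr2 : N.trace = ∑ i, hH.eigenvalues i := by
    conv_lhs => rw [hH.spectral_theorem]
    rw [Unitary.conjStarAlgAut_apply]
    rw [Matrix.trace_mul_comm]
    rw [← Matrix.mul_assoc]
    have hU : (star (Matrix.IsHermitian.eigenvectorUnitary hH : Matrix (Fin m) (Fin m) ℝ)) *
        (Matrix.IsHermitian.eigenvectorUnitary hH : Matrix (Fin m) (Fin m) ℝ) = 1 := by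
      exact Matrix.mem_unitaryGroup_iff'.mp (Matrix.IsHermitian.eigenvectorUnitary hH).2
    rw [hU, Matrix.one_mul, Matrix.trace_diagonal]
    simp
  have hNdet1 : N.det ≤ 1 := by
    rw [hdet]
    have := amgm_aux m hm hH.eigenvalues (hN.eigenvalues_nonneg)
    calc ∏ i, hH.eigenvalues i ≤ ((∑ i, hH.eigenvalues i) / m) ^ m := this
      _ = 1 := by
          rw [← htr2, htr]
          rw [div_self (Nat.cast_ne_zero.mpr hm.ne')]
          simp
  -- relate det N and det M
  have hdetD : D.det = ∏ i, d i := Matrix.det_diagonal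
  have hdetN : N.det = (∏ i, d i)^2 * M.det := by
    rw [hNdef, Matrix.det_mul, Matrix.det_mul, hdetD]
    ring
  have hprodd : (0:ℝ) < (∏ i, d i)^2 :=
    pow_pos (Finset.prod_pos (fun i _ => hdpos i)) 2
  have hMdet : M.det = N.det * ∏ i, M i i := by
    rw [hdetN]
    have : (∏ i, d i)^2 * ∏ i, M i i = 1 := by
      rw [← Finset.prod_pow, ← Finset.prod_mul_distrib]
      apply Finset.prod_eq_one
      intro i _
      rw [hd]
      have h2 : Real.sqrt (M i i) * Real.sqrt (M i i) = M i i :=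
        Real.mul_self_sqrt (hdiag i)
      have h1 : Real.sqrt (M i i) ≠ 0 := (Real.sqrt_pos.mpr (hpos i)).ne'
      field_simp
      nlinarith [h2]
    calc M.det = M.det * ((∏ i, d i)^2 * ∏ i, M i i) := by rw [this, mul_one]
      _ = (∏ i, d i)^2 * M.det * ∏ i, M i i := by ring
  rw [hMdet]
  have hprodM : (0:ℝ) ≤ ∏ i, M i i := Finset.prod_nonneg fun i _ => hdiag i
  calc N.det * ∏ i, M i i ≤ 1 * ∏ i, M i i :=
        mul_le_mul_of_nonneg_right hNdet1 hprodM
    _ = ∏ i, M i i := one_mul _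

lemma gram_posSemidef {H : Type*} [NormedAddCommGroup H] [InnerProductSpace ℝ H]
    {m : ℕ} (v : Fin m → H) :
    (Matrix.of fun i j => (inner ℝ (v i) (v j) : ℝ)).PosSemidef := by
  rw [Matrix.posSemidef_iff_dotProduct_mulVec]
  constructor
  · ext i j
    simp [Matrix.conjTranspose_apply, real_inner_comm]
  · intro y
    have hrw : dotProduct (star y)
        ((Matrix.of fun i j => (inner ℝ (v i) (v j) : ℝ)) *ᵥ y)
        = (inner ℝ (∑ i, y i • v i) (∑ j, y j • v j) : ℝ) := by
      rw [sum_inner]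
      simp only [dotProduct, Matrix.mulVec, dotProduct, star_trivial,
        Matrix.of_apply, inner_sum, real_inner_smul_left, real_inner_smul_right]
      congr 1
      ext i
      rw [Finset.mul_sum]
      congr 1; ext j; ring
    rw [hrw]
    exact real_inner_self_nonneg

/-- If M_n(x₀,…,x_n) ≥ ω·tⁿ, diam{x₀,…,x_n} ≤ 3t, and the point
w = x₀ + Σᵢ sᵢ·(xᵢ − x₀) satisfies ‖w − x₀‖ ≤ 2t, then max |sᵢ| ≤ 2·3^{n−1}/ω. -/
theorem barycentric_coefficients_bound {H : Type*} [NormedAddCommGroup H]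
    [InnerProductSpace ℝ H] (n : ℕ) (hn : 1 ≤ n) (ω t : ℝ) (hω : 0 < ω) (ht : 0 < t)
    (x : Fin (n + 1) → H) (hcont : ω * t ^ n ≤ simplexContent n x)
    (hdiam : Metric.diam (Set.range x) ≤ 3 * t)
    (s : Fin n → ℝ) (hw : ‖∑ i, s i • (x i.succ - x 0)‖ ≤ 2 * t) :
    ∀ i, |s i| ≤ 2 * 3 ^ (n - 1) / ω := by
  intro i
  set v : Fin n → H := fun j => x j.succ - x 0 with hv
  set G : Matrix (Fin n) (Fin n) ℝ := Matrix.of fun a b => (inner ℝ (v a) (v b) : ℝ) with hG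
  set w : H := ∑ j, s j • v j with hwdef
  -- det G is positive
  have hGpsd : G.PosSemidef := gram_posSemidef v
  have hsc : simplexContent n x = Real.sqrt G.det := rfl
  have hωtn : 0 < ω * t ^ n := by positivity
  have hsqrt_pos : 0 < Real.sqrt G.det := lt_of_lt_of_le hωtn (hsc ▸ hcont)
  have hGdet_pos : 0 < G.det := Real.sqrt_pos.mp hsqrt_pos
  have hGdet_ge : (ω * t ^ n) ^ 2 ≤ G.det := by
    have h1 : (ω * t ^ n) ^ 2 ≤ Real.sqrt G.det ^ 2 :=
      pow_le_pow_left₀ hωtn.le (hsc ▸ hcont) 2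
    rwa [Real.sq_sqrt hGdet_pos.le] at h1
  -- the modified family B
  set E : Matrix (Fin n) (Fin n) ℝ := (1 : Matrix (Fin n) (Fin n) ℝ).updateCol i s with hE
  set B : Fin n → H := Function.update v i w with hB
  have hBv : ∀ j, B j = ∑ l, E l j • v l := by
    intro j
    by_cases h : j = i
    · subst h
      rw [show B j = w from Function.update_self j w v, hwdef]
      refine Finset.sum_congr rfl fun l _ => ?_
      congr 1
      simp [hE, Matrix.updateCol_apply]
    · simp only [hB, Function.update_of_ne h, hE, Matrix.updateCol_apply, if_neg h,
        Matrix.one_apply]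
      rw [Finset.sum_eq_single j]
      · simp
      · intro l _ hl; simp [hl]
      · intro h'; exact absurd (Finset.mem_univ j) h'
  have hGramB : (Matrix.of fun a b => (inner ℝ (B a) (B b) : ℝ)) = Eᵀ * G * E := by
    ext a b
    simp only [Matrix.of_apply, hBv, Matrix.mul_apply, Matrix.transpose_apply]
    rw [sum_inner]
    simp only [inner_sum, real_inner_smul_left, real_inner_smul_right]
    rw [Finset.sum_comm]
    congr 1; ext m'
    rw [Finset.sum_mul]
    congr 1; ext l
    simp only [hG, Matrix.of_apply]
    ring
  have hdetE : E.det = s i := by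
    rw [hE, ← Matrix.cramer_apply, Matrix.cramer_one]
    rfl
  have hdetB : (Matrix.of fun a b => (inner ℝ (B a) (B b) : ℝ)).det = s i ^ 2 * G.det := by
    rw [hGramB, Matrix.det_mul, Matrix.det_mul, Matrix.det_transpose, hdetE]
    ring
  -- Hadamard bound
  have hBpsd := gram_posSemidef B
  have hHad := hadamard_psd n _ hBpsd
  rw [hdetB] at hHad
  -- norm bounds
  have hbdd : Bornology.IsBounded (Set.range x) := (Set.finite_range x).isBounded
  have hvle : ∀ j, ‖v j‖ ≤ 3 * t := by
    intro j
    have : ‖v j‖ = dist (x j.succ) (x 0) := by rw [dist_eq_norm]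
    rw [this]
    exact le_trans (Metric.dist_le_diam_of_mem hbdd (Set.mem_range_self _)
      (Set.mem_range_self _)) hdiam
  have hwle : ‖w‖ ≤ 2 * t := hw
  obtain ⟨k, rfl⟩ : ∃ k, n = k + 1 := ⟨n - 1, (Nat.succ_pred_eq_of_pos hn).symm⟩
  have hprod : ∏ j, (inner ℝ (B j) (B j) : ℝ) ≤ (2 * t) ^ 2 * ((3 * t) ^ 2) ^ k := by
    have hrw : ∀ j, (inner ℝ (B j) (B j) : ℝ) = ‖B j‖ ^ 2 := fun j =>
      real_inner_self_eq_norm_sq (B j)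
    simp only [hrw]
    rw [← Finset.mul_prod_erase Finset.univ _ (Finset.mem_univ i)]
    have h1 : ‖B i‖ ^ 2 ≤ (2 * t) ^ 2 := by
      have : B i = w := Function.update_self i w v
      rw [this]
      exact pow_le_pow_left₀ (norm_nonneg _) hwle 2
    have h2 : ∏ j ∈ Finset.univ.erase i, ‖B j‖ ^ 2 ≤ ((3 * t) ^ 2) ^ k := by
      have hcard : (Finset.univ.erase i).card = k := by
        rw [Finset.card_erase_of_mem (Finset.mem_univ i), Finset.card_univ]
        simp
      calc ∏ j ∈ Finset.univ.erase i, ‖B j‖ ^ 2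
          ≤ ∏ j ∈ Finset.univ.erase i, (3 * t) ^ 2 := by
            apply Finset.prod_le_prod (fun j _ => sq_nonneg _)
            intro j hj
            have hji : j ≠ i := Finset.ne_of_mem_erase hj
            have : B j = v j := Function.update_of_ne hji w v
            rw [this]
            exact pow_le_pow_left₀ (norm_nonneg _) (hvle j) 2
        _ = ((3 * t) ^ 2) ^ k := by rw [Finset.prod_const, hcard]
    exact mul_le_mul h1 h2 (Finset.prod_nonneg fun j _ => sq_nonneg _) (sq_nonneg _)
  have hmain : s i ^ 2 * G.det ≤ (2 * t * (3 * t) ^ k) ^ 2 := by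
    have ha : s i ^ 2 * G.det ≤ ∏ j, (inner ℝ (B j) (B j) : ℝ) := by
      simpa using hHad
    have hb := le_trans ha hprod
    calc s i ^ 2 * G.det ≤ (2 * t) ^ 2 * ((3 * t) ^ 2) ^ k := hb
      _ = (2 * t * (3 * t) ^ k) ^ 2 := by
          rw [mul_pow (2*t) ((3*t)^k) 2, ← pow_mul, ← pow_mul, Nat.mul_comm]
  -- combine
  have hkey : (|s i| * (ω * t ^ (k + 1))) ^ 2 ≤ (2 * t * (3 * t) ^ k) ^ 2 := by
    calc (|s i| * (ω * t ^ (k + 1))) ^ 2 = s i ^ 2 * (ω * t ^ (k + 1)) ^ 2 := by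
          rw [mul_pow, sq_abs]
      _ ≤ s i ^ 2 * G.det := mul_le_mul_of_nonneg_left hGdet_ge (sq_nonneg _)
      _ ≤ (2 * t * (3 * t) ^ k) ^ 2 := hmain
  have habs : |s i| * (ω * t ^ (k + 1)) ≤ 2 * t * (3 * t) ^ k := by
    have h1 : 0 ≤ |s i| * (ω * t ^ (k + 1)) := by positivity
    have h2 : 0 ≤ 2 * t * (3 * t) ^ k := by positivity
    exact (pow_le_pow_iff_left₀ h1 h2 two_ne_zero).mp hkey
  have htn : (0:ℝ) < t ^ (k + 1) := by positivity
  have hexp : 2 * t * (3 * t) ^ k = 2 * 3 ^ k * t ^ (k + 1) := by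
    rw [mul_pow]; ring
  have habs' : (|s i| * ω) * t ^ (k + 1) ≤ (2 * 3 ^ k) * t ^ (k + 1) := by
    calc (|s i| * ω) * t ^ (k + 1) = |s i| * (ω * t ^ (k + 1)) := by ring
      _ ≤ 2 * t * (3 * t) ^ k := habs
      _ = (2 * 3 ^ k) * t ^ (k + 1) := hexp
  have h3 : |s i| * ω ≤ 2 * 3 ^ k := le_of_mul_le_mul_right habs' htn
  simp only [Nat.add_sub_cancel]
  rw [le_div_iff₀ hω]
  exact h3
end
end

section
/- Let L be a d-plane in H, x̃₀,…,x̃_d points with x̃_i = x_i + z̃_i + ε̃_i where x_i ∈ L', z̃_i is parallel to the linear part of a fixed n-plane L' through the x_i's, ε̃_i ⊥ that linear part, and ‖x̃_i − x_i‖ ≤ δ·t for all i. Let P and P̃ be the orthogonal projections onto L' and onto the affine span L̃ of x̃₀,…,x̃_n respectively. Then for any y ∈ H whose barycentric coefficients s̃_i(y) (defined by P̃(y) = x̃₀ + Σ s̃_i(y)(x̃_i − x̃₀)) satisfy max_i |s̃_i(y)| ≤ S, one has ‖P(P̃(y)) − P̃(y)‖ ≤ (1 + 2nS)·δ·t. 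-/
open Metric EuclideanGeometry Finset

noncomputable section

/-- Perturbed projection bound: if x̃ᵢ = xᵢ + z̃ᵢ + ε̃ᵢ with xᵢ ∈ L', z̃ᵢ in the direction of
L', ε̃ᵢ ⊥ the direction of L', and ‖x̃ᵢ − xᵢ‖ ≤ δ·t, then for any point
p = x̃₀ + Σᵢ s̃ᵢ(x̃ᵢ − x̃₀) of the affine span of the x̃ᵢ (i.e. p = P̃(y)) whose barycentric
coefficients satisfy |s̃ᵢ| ≤ S, the orthogonal projection P onto L' satisfies
‖P(p) − p‖ ≤ (1 + 2nS)·δ·t. -/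
theorem perturbed_projection_bound {H : Type*} [NormedAddCommGroup H]
    [InnerProductSpace ℝ H] [CompleteSpace H]
    (n : ℕ) (hn : 1 ≤ n) (δ t S : ℝ) (hδ : 0 < δ) (ht : 0 < t) (hS : 0 ≤ S)
    (L' : AffineSubspace ℝ H) [Nonempty L'] [Submodule.HasOrthogonalProjection L'.direction]
    (x xt z ε : Fin (n + 1) → H)
    (hx : ∀ i, x i ∈ L') (hz : ∀ i, z i ∈ L'.direction)
    (hε : ∀ i, ∀ w ∈ L'.direction, (inner ℝ (ε i) w : ℝ) = 0)
    (hdecomp : ∀ i, xt i = x i + z i + ε i)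
    (hclose : ∀ i, ‖xt i - x i‖ ≤ δ * t)
    (s : Fin n → ℝ) (hs : ∀ i, |s i| ≤ S) :
    ‖(orthogonalProjection L' (xt 0 + ∑ i, s i • (xt i.succ - xt 0)) : H) -
        (xt 0 + ∑ i, s i • (xt i.succ - xt 0))‖ ≤ (1 + 2 * n * S) * (δ * t) := by
  -- each ε i has norm at most δ t
  have hεnorm : ∀ i, ‖ε i‖ ≤ δ * t := by
    intro i
    have h1 : ‖z i + ε i‖ ≤ δ * t := by
      have := hclose i
      rwa [hdecomp i, show x i + z i + ε i - x i = z i + ε i by abel] at this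
    have h2 : (inner ℝ (z i) (ε i) : ℝ) = 0 := by
      rw [real_inner_comm]; exact hε i (z i) (hz i)
    have h3 : ‖z i + ε i‖ ^ 2 = ‖z i‖ ^ 2 + ‖ε i‖ ^ 2 := by
      rw [norm_add_sq_real, h2]; ring
    nlinarith [norm_nonneg (z i), norm_nonneg (ε i), norm_nonneg (z i + ε i),
      mul_pos hδ ht]
  set q : H := x 0 + z 0 + ∑ i, s i • ((x i.succ + z i.succ) - (x 0 + z 0)) with hq
  set e : H := ε 0 + ∑ i, s i • (ε i.succ - ε 0) with he
  have hsplit : ∀ i : Fin n, s i • (xt i.succ - xt 0) =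
      s i • (ε i.succ - ε 0) + s i • ((x i.succ + z i.succ) - (x 0 + z 0)) := fun i => by
    rw [hdecomp, hdecomp, ← smul_add]; congr 1; abel
  have hpe : xt 0 + ∑ i, s i • (xt i.succ - xt 0) = e + q := by
    rw [hq, he]
    simp only [hsplit, Finset.sum_add_distrib]
    rw [hdecomp 0]
    abel
  -- q is in L'
  have hv : z 0 + ∑ i, s i • ((x i.succ - x 0) + (z i.succ - z 0)) ∈ L'.direction := by
    refine Submodule.add_mem _ (hz 0) (Submodule.sum_mem _ fun i _ => Submodule.smul_mem _ _ ?_)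
    refine Submodule.add_mem _ ?_ (Submodule.sub_mem _ (hz i.succ) (hz 0))
    have := AffineSubspace.vsub_mem_direction (hx i.succ) (hx 0)
    simpa [vsub_eq_sub] using this
  have hqmem : q ∈ L' := by
    have hterm : ∀ i : Fin n, (x i.succ + z i.succ) - (x 0 + z 0) =
        (x i.succ - x 0) + (z i.succ - z 0) := fun i => by abel
    have hq2 : q = (z 0 + ∑ i, s i • ((x i.succ - x 0) + (z i.succ - z 0))) +ᵥ x 0 := by
      rw [hq]
      simp only [hterm, vadd_eq_add]
      abel
    rw [hq2]
    exact AffineSubspace.vadd_mem_of_mem_direction hv (hx 0)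
  -- e is orthogonal to the direction
  have hemem : e ∈ L'.directionᗮ := by
    rw [Submodule.mem_orthogonal']
    intro w hw
    rw [he]
    simp only [inner_add_left, sum_inner, inner_smul_left, inner_sub_left, hε _ _ hw]
    simp
  have hproj : (orthogonalProjection L' (xt 0 + ∑ i, s i • (xt i.succ - xt 0)) : H) = q := by
    rw [hpe, show e + q = e +ᵥ q from rfl, orthogonalProjection_vadd_eq_self hqmem hemem]
  rw [hproj, hpe, show q - (e + q) = -e by abel, norm_neg]
  -- norm bound on e
  have hbound : ‖e‖ ≤ δ * t + ∑ i : Fin n, S * (2 * (δ * t)) := by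
    rw [he]
    refine le_trans (norm_add_le _ _) (add_le_add (hεnorm 0) ?_)
    refine le_trans (norm_sum_le _ _) (Finset.sum_le_sum fun i _ => ?_)
    rw [norm_smul, Real.norm_eq_abs]
    have h1 : ‖ε i.succ - ε 0‖ ≤ 2 * (δ * t) := by
      refine le_trans (norm_sub_le _ _) ?_
      linarith [hεnorm i.succ, hεnorm 0]
    exact mul_le_mul (hs i) h1 (norm_nonneg _) hS
  refine le_trans hbound ?_
  rw [Finset.sum_const, Finset.card_univ, Fintype.card_fin, nsmul_eq_mul]
  exact le_of_eq (by ring)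
end
end
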